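/- arXiv:2505.08735 — 2 statements merged into one kernel-verified Lean document; each statement's English description precedes it below -/
import Mathlib

section
/- Let α > 0, r : T → ℝ on a finite nonempty set T, and π the softmax policy π(τ) = exp(r(τ)/α)/Z. Then for any τ₁, τ₂ ∈ T, σ(r(τ₁) - r(τ₂)) = σ(α·(log π(τ₁) - log π(τ₂))), where σ(x) = 1/(1+exp(-x)) is the logistic sigmoid. -/
/-- The Bradley-Terry preference probability can be expressed purely in terms
of policy log-probabilities, with the partition function `Z` cancelling. -/
theorem bradley_terry_policy_reparameterization
    {T : Type*} [Fintype T] [Nonempty T] (α : ℝ) (hα : 0 < α) (r : T → ℝ)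
    (Z : ℝ) (hZ : Z = ∑ τ' : T, Real.exp (r τ' / α))
    (p : T → ℝ) (hp : ∀ τ, p τ = Real.exp (r τ / α) / Z)
    (σ : ℝ → ℝ) (hσ : ∀ x, σ x = 1 / (1 + Real.exp (-x))) :
    ∀ τ₁ τ₂ : T,
      σ (r τ₁ - r τ₂) = σ (α * (Real.log (p τ₁) - Real.log (p τ₂))) := by
  intro τ₁ τ₂
  have hZpos : 0 < Z := by
    rw [hZ]; exact Finset.sum_pos (fun i _ => Real.exp_pos _) Finset.univ_nonempty
  have hlog : ∀ τ, Real.log (p τ) = r τ / α - Real.log Z := by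
    intro τ
    rw [hp, Real.log_div (Real.exp_ne_zero _) (ne_of_gt hZpos), Real.log_exp]
  rw [hlog, hlog]
  congr 1
  field_simp
  ring
end

section
/- For the Plackett-Luce model on a finite list of n distinct items with utilities u : Fin n → ℝ, the probabilities over all rankings sum to 1: ∑_{permutations π of Fin n} ∏_{k=0}^{n-1} exp(u(π(k))) / ∑_{j=k}^{n-1} exp(u(π(j))) = 1. -/
open Finset

/-- The Plackett-Luce probabilities over all rankings (permutations) of `n`
items sum to `1`: for each permutation `π`, the probability is
`∏ k, exp(u (π k)) / ∑_{j ≥ k} exp(u (π j))`. -/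
theorem plackett_luce_sum_to_one (n : ℕ) (u : Fin n → ℝ) :
    ∑ p : Equiv.Perm (Fin n),
      ∏ k : Fin n,
        Real.exp (u (p k)) /
          ∑ j ∈ Finset.univ.filter (fun j : Fin n => k ≤ j),
            Real.exp (u (p j)) = 1 := by
  induction n with
  | zero => simp
  | succ n ih =>
    have hS : (0:ℝ) < ∑ j : Fin (n+1), Real.exp (u j) :=
      Finset.sum_pos (fun j _ => Real.exp_pos _) ⟨0, mem_univ 0⟩
    rw [← Equiv.sum_comp (Equiv.Perm.decomposeFin (n := n)).symm, Fintype.sum_prod_type]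
    have key : ∀ (i : Fin (n+1)) (e : Equiv.Perm (Fin n)),
        (∏ k : Fin (n+1),
          Real.exp (u (Equiv.Perm.decomposeFin.symm (i, e) k)) /
            ∑ j ∈ Finset.univ.filter (fun j : Fin (n+1) => k ≤ j),
              Real.exp (u (Equiv.Perm.decomposeFin.symm (i, e) j)))
        = (Real.exp (u i) / ∑ j : Fin (n+1), Real.exp (u j)) *
          ∏ k : Fin n,
            Real.exp ((fun m : Fin n => u (Equiv.swap 0 i m.succ)) (e k)) /
              ∑ j ∈ Finset.univ.filter (fun j : Fin n => k ≤ j),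
                Real.exp ((fun m : Fin n => u (Equiv.swap 0 i m.succ)) (e j)) := by
      intro i e
      rw [Fin.prod_univ_succ]
      congr 1
      · have h0 : Finset.univ.filter (fun j : Fin (n+1) => (0:Fin (n+1)) ≤ j) = univ := by
          simp [Fin.zero_le]
        rw [h0, Equiv.Perm.decomposeFin_symm_apply_zero,
          Equiv.sum_comp (Equiv.Perm.decomposeFin.symm (i, e)) (fun j => Real.exp (u j))]
      · apply Finset.prod_congr rfl
        intro k _
        congr 1
        · rw [Equiv.Perm.decomposeFin_symm_apply_succ]
        · rw [Finset.sum_filter, Finset.sum_filter, Fin.sum_univ_succ]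
          have : ¬ (Fin.succ k ≤ 0) := by simp [Fin.le_def, Fin.succ]
          rw [if_neg this, zero_add]
          apply Finset.sum_congr rfl
          intro m _
          simp only [Fin.succ_le_succ_iff, Equiv.Perm.decomposeFin_symm_apply_succ]
    calc ∑ i : Fin (n+1), ∑ e : Equiv.Perm (Fin n),
          ∏ k : Fin (n+1),
            Real.exp (u (Equiv.Perm.decomposeFin.symm (i, e) k)) /
              ∑ j ∈ Finset.univ.filter (fun j : Fin (n+1) => k ≤ j),
                Real.exp (u (Equiv.Perm.decomposeFin.symm (i, e) j))
        = ∑ i : Fin (n+1), (Real.exp (u i) / ∑ j : Fin (n+1), Real.exp (u j)) * 1 := by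
          apply Finset.sum_congr rfl
          intro i _
          rw [← ih (fun m : Fin n => u (Equiv.swap 0 i m.succ)), Finset.mul_sum]
          exact Finset.sum_congr rfl (fun e _ => key i e)
      _ = 1 := by
          simp only [mul_one, ← Finset.sum_div]
          exact div_self hS.ne'
end
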